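/- Kernel dimension bound for decoding: let Dec : C_A ⋆ C_B → F_q^{m×n} be a surjective linear map whose kernel contains the subcode C_A ⋆ C_B^sec, where C_A is full-support of dimension mp+X and C_B^sec is a full-support MDS code of dimension X with C_A ⋆ C_B^sec ≠ F_q^N. Then dim(C_A ⋆ C_B) ≥ mn + mp + 2X − 1. -/

import Mathlib

def starSet {F : Type*} [Field F] {n : ℕ} (C D : Submodule F (Fin n → F)) :
    Set (Fin n → F) :=
  {v | ∃ c ∈ C, ∃ d ∈ D, v = fun i => c i * d i}

def starProd {F : Type*} [Field F] {n : ℕ} (C D : Submodule F (Fin n → F)) :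
    Submodule F (Fin n → F) :=
  Submodule.span F (starSet C D)

def wt {F : Type*} [Field F] [DecidableEq F] {n : ℕ} (v : Fin n → F) : ℕ :=
  (Finset.univ.filter fun i => v i ≠ 0).card

def IsMinDist {F : Type*} [Field F] [DecidableEq F] {n : ℕ}
    (C : Submodule F (Fin n → F)) (d : ℕ) : Prop :=
  (∃ v ∈ C, v ≠ 0 ∧ wt v = d) ∧ ∀ v ∈ C, v ≠ 0 → d ≤ wt v

def FullSupport {F : Type*} [Field F] {n : ℕ} (C : Submodule F (Fin n → F)) : Prop :=
  ∀ i : Fin n, ∃ c ∈ C, c i ≠ 0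

def IsMDS {F : Type*} [Field F] [DecidableEq F] {n : ℕ}
    (C : Submodule F (Fin n → F)) : Prop :=
  IsMinDist C (n - Module.finrank F C + 1)

open Module
set_option linter.unusedSectionVars false
set_option synthInstance.maxHeartbeats 1000000
set_option maxHeartbeats 1000000

section aux
variable {F : Type*} [Field F] [DecidableEq F] {n : ℕ}

noncomputable def restr (T : Finset (Fin n)) : (Fin n → F) →ₗ[F] (↥T → F) :=
  LinearMap.funLeft F F (fun i => (i : Fin n))

@[simp] lemma restr_apply (T : Finset (Fin n)) (v : Fin n → F) (i : ↥T) :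
    restr T v i = v ↑i := rfl

lemma exists_infoset (C : Submodule F (Fin n → F)) :
    ∃ P : Finset (Fin n), P.card = finrank F C ∧
      ∀ c ∈ C, (∀ i ∈ P, c i = 0) → c = 0 := by
  suffices h : ∀ (s : ℕ) (T : Finset (Fin n)), T.card = s →
      (∀ c ∈ C, (∀ i ∈ T, c i = 0) → c = 0) →
      ∃ P, P ⊆ T ∧ P.card = finrank F C ∧ ∀ c ∈ C, (∀ i ∈ P, c i = 0) → c = 0 by
    obtain ⟨P, _, h1, h2⟩ := h (Finset.univ.card) Finset.univ rfl (by
      intro c hc hv; funext i; exact hv i (Finset.mem_univ i))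
    exact ⟨P, h1, h2⟩
  intro s
  induction s using Nat.strong_induction_on with
  | _ s ih =>
    intro T hTs hT
    have hinj : Function.Injective ((restr (F := F) T).comp C.subtype) := by
      rw [← LinearMap.ker_eq_bot, LinearMap.ker_eq_bot']
      intro c hc
      ext1
      refine hT c c.2 (fun i hi => ?_)
      exact congrFun hc ⟨i, hi⟩
    have hle : finrank F C ≤ T.card := by
      have := LinearMap.finrank_le_finrank_of_injective hinj
      simpa [Module.finrank_pi] using this
    rcases eq_or_lt_of_le hle with heq | hlt
    · exact ⟨T, le_refl _, heq.symm, hT⟩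
    · by_cases hrem : ∃ i ∈ T, ∀ c ∈ C, (∀ j ∈ T.erase i, c j = 0) → c = 0
      · obtain ⟨i, hiT, hprop⟩ := hrem
        obtain ⟨P, hPsub, h1, h2⟩ := ih (T.erase i).card
          (by rw [Finset.card_erase_of_mem hiT]; omega) _ rfl hprop
        exact ⟨P, hPsub.trans (Finset.erase_subset _ _), h1, h2⟩
      · exfalso
        push_neg at hrem
        have hch : ∀ i : ↥T, ∃ c : ↥C, (∀ j ∈ T.erase ↑i, (c : Fin n → F) j = 0) ∧
            (c : Fin n → F) ≠ 0 := by
          intro i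
          obtain ⟨c, hcC, hcv, hcne⟩ := hrem ↑i i.2
          exact ⟨⟨c, hcC⟩, hcv, hcne⟩
        choose cc hc1 hc2 using hch
        have hdiag : ∀ i : ↥T, (cc i : Fin n → F) ↑i ≠ 0 := by
          intro i hzero
          refine hc2 i (hT _ (cc i).2 (fun j hj => ?_))
          rcases eq_or_ne j ↑i with rfl | hne
          · exact hzero
          · exact hc1 i j (Finset.mem_erase.2 ⟨hne, hj⟩)
        have hli : LinearIndependent F cc := by
          rw [Fintype.linearIndependent_iff]
          intro g hg i
          have hg' : (↑(∑ j, g j • cc j) : Fin n → F) ↑i = 0 := by rw [hg]; rfl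
          have : ∑ j, g j * (cc j : Fin n → F) ↑i = 0 := by
            simpa using hg'
          rw [Finset.sum_eq_single i] at this
          · exact (mul_eq_zero.1 this).resolve_right (hdiag i)
          · intro j _ hji
            have : (cc j : Fin n → F) ↑i = 0 :=
              hc1 j ↑i (Finset.mem_erase.2 ⟨fun h => hji (Subtype.ext h.symm ▸ rfl), i.2⟩)
            simp [this]
          · simp
        have := hli.fintype_card_le_finrank
        simp only [Fintype.card_coe] at this
        omega


noncomputable def KV (D : Submodule F (Fin n → F)) (Z : Finset (Fin n)) :
    Submodule F ↥D :=
  LinearMap.ker ((restr Z).comp D.subtype)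

lemma mem_KV {D : Submodule F (Fin n → F)} {Z : Finset (Fin n)} {x : ↥D} :
    x ∈ KV D Z ↔ ∀ i ∈ Z, (x : Fin n → F) i = 0 := by
  simp only [KV, LinearMap.mem_ker, LinearMap.comp_apply, funext_iff]
  constructor
  · intro h i hi; exact h ⟨i, hi⟩
  · intro h i; exact h ↑i i.2

lemma KV_finrank_ge (D : Submodule F (Fin n → F)) (Z : Finset (Fin n)) :
    finrank F D - Z.card ≤ finrank F (KV D Z) := by
  have h1 := LinearMap.finrank_range_add_finrank_ker ((restr (F := F) Z).comp D.subtype)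
  have h2 : finrank F (LinearMap.range ((restr (F := F) Z).comp D.subtype)) ≤ Z.card := by
    have := Submodule.finrank_le (LinearMap.range ((restr (F := F) Z).comp D.subtype))
    simpa [Module.finrank_pi, Fintype.card_coe] using this
  have heq : KV D Z = LinearMap.ker ((restr (F := F) Z).comp D.subtype) := rfl
  rw [heq]
  omega

lemma KV_eq_bot (D : Submodule F (Fin n → F))
    (hz : ∀ d ∈ D, d ≠ 0 → (Finset.univ.filter fun i => d i = 0).card ≤ finrank F D - 1)
    (hl : 1 ≤ finrank F D) {Z : Finset (Fin n)} (hZ : finrank F D ≤ Z.card) :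
    KV D Z = ⊥ := by
  rw [eq_bot_iff]
  intro x hx
  rw [mem_KV] at hx
  by_contra hne
  have hxne : (x : Fin n → F) ≠ 0 := by
    intro h
    exact hne (by simp [Submodule.mem_bot]; exact Subtype.ext h)
  have hcard := hz ↑x x.2 hxne
  have hsub : Z ⊆ Finset.univ.filter fun i => (x : Fin n → F) i = 0 := by
    intro i hi
    simp [hx i hi]
  have := Finset.card_le_card hsub
  omega

lemma KV_finrank_le (D : Submodule F (Fin n → F))
    (hz : ∀ d ∈ D, d ≠ 0 → (Finset.univ.filter fun i => d i = 0).card ≤ finrank F D - 1)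
    (hl : 1 ≤ finrank F D) {Z : Finset (Fin n)} (hZ : Z.card ≤ finrank F D) :
    finrank F (KV D Z) ≤ finrank F D - Z.card := by
  have hln : finrank F D ≤ n := by
    have := Submodule.finrank_le D
    simpa [Module.finrank_fin_fun] using this
  obtain ⟨Z', hZZ', hZ'card⟩ := Finset.exists_superset_card_eq hZ (by simp [hln])
  have hbot : KV D Z' = ⊥ := KV_eq_bot D hz hl (le_of_eq hZ'card.symm)
  have hker : LinearMap.ker ((restr (F := F) (Z' \ Z)).comp
      (D.subtype.comp (KV D Z).subtype)) = ⊥ := by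
    rw [LinearMap.ker_eq_bot']
    intro x hx
    have hx' : ∀ i ∈ Z' \ Z, ((x : ↥D) : Fin n → F) i = 0 := by
      intro i hi
      exact congrFun hx ⟨i, hi⟩
    have hmem : (x : ↥D) ∈ KV D Z' := by
      rw [mem_KV]
      intro i hi
      by_cases hiZ : i ∈ Z
      · exact (mem_KV.1 x.2) i hiZ
      · exact hx' i (Finset.mem_sdiff.2 ⟨hi, hiZ⟩)
    have : (x : ↥D) = 0 := by
      rw [hbot] at hmem
      simpa using hmem
    exact Subtype.ext this
  have hginj : Function.Injective ⇑((restr (F := F) (Z' \ Z)).comp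
      (D.subtype.comp (KV D Z).subtype)) := (injective_iff_map_eq_zero _).2 (fun a ha => (Submodule.eq_bot_iff _).1 hker a ha)
  have hfin := LinearMap.finrank_le_finrank_of_injective hginj
  have hdim : finrank F (↥(Z' \ Z) → F) = (Z' \ Z).card := by
    rw [Module.finrank_pi, Fintype.card_coe]
  have hcard : (Z' \ Z).card = finrank F D - Z.card := by
    rw [Finset.card_sdiff_of_subset hZZ', hZ'card]
  rw [hdim, hcard] at hfin
  exact hfin

lemma exists_vanishing (D : Submodule F (Fin n → F))
    (hz : ∀ d ∈ D, d ≠ 0 → (Finset.univ.filter fun i => d i = 0).card ≤ finrank F D - 1)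
    (hl : 1 ≤ finrank F D) {Z : Finset (Fin n)} {i : Fin n} (hi : i ∉ Z)
    (hcard : Z.card + 1 ≤ finrank F D) :
    ∃ d ∈ D, (∀ j ∈ Z, d j = 0) ∧ d i ≠ 0 := by
  have h1 : finrank F (KV D (insert i Z)) ≤ finrank F D - Z.card - 1 := by
    have := KV_finrank_le D hz hl (Z := insert i Z)
      (by rw [Finset.card_insert_of_notMem hi]; omega)
    rw [Finset.card_insert_of_notMem hi] at this
    omega
  have h2 := KV_finrank_ge D Z
  by_contra h
  push_neg at h
  have hle : KV D Z ≤ KV D (insert i Z) := by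
    intro x hx
    rw [mem_KV] at hx ⊢
    intro j hj
    rcases Finset.mem_insert.1 hj with rfl | hjZ
    · exact h ↑x x.2 (fun j' hj' => hx j' hj')
    · exact hx j hjZ
  have := Submodule.finrank_mono hle
  omega


lemma infoset_pick (C : Submodule F (Fin n → F)) (hC : ∀ i : Fin n, ∃ c ∈ C, c i ≠ 0)
    (P : Finset (Fin n)) (hPcard : P.card = finrank F C)
    (hPinj : ∀ c ∈ C, (∀ q ∈ P, c q = 0) → c = 0) (i : Fin n) :
    ∃ p ∈ P, ∃ c ∈ C, c i ≠ 0 ∧ ∀ q ∈ P, q ≠ p → c q = 0 := by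
  -- the restriction map C → (P → F) is bijective
  have hinj : Function.Injective ((restr (F := F) P).comp C.subtype) := by
    rw [← LinearMap.ker_eq_bot, LinearMap.ker_eq_bot']
    intro c hc
    ext1
    exact hPinj c c.2 (fun q hq => congrFun hc ⟨q, hq⟩)
  have hrange : LinearMap.range ((restr (F := F) P).comp C.subtype) = ⊤ := by
    apply Submodule.eq_top_of_finrank_eq
    rw [LinearMap.finrank_range_of_inj hinj, Module.finrank_pi, Fintype.card_coe, hPcard]
  -- preimages of standard basis vectors
  have hb : ∀ p : ↥P, ∃ b : ↥C, ∀ q : ↥P, (b : Fin n → F) ↑q = if q = p then 1 else 0 := by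
    intro p
    have : (Pi.single p 1 : ↥P → F) ∈
        LinearMap.range ((restr (F := F) P).comp C.subtype) := by rw [hrange]; trivial
    obtain ⟨b, hbe⟩ := this
    refine ⟨b, fun q => ?_⟩
    have h := congrFun hbe q
    rw [Pi.single_apply] at h
    exact h
  choose b hbspec using hb
  by_cases hex : ∃ p : ↥P, (b p : Fin n → F) i ≠ 0
  · obtain ⟨p, hp⟩ := hex
    refine ⟨↑p, p.2, ↑(b p), (b p).2, hp, fun q hq hqp => ?_⟩
    have := hbspec p ⟨q, hq⟩
    rw [if_neg (fun h => hqp (by simpa using congrArg Subtype.val h))] at this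
    exact this
  · exfalso
    push_neg at hex
    obtain ⟨c, hcC, hci⟩ := hC i
    -- c decomposes over the b p's, all of which vanish at i
    have hdec : c - ∑ p : ↥P, c ↑p • (b p : Fin n → F) = 0 := by
      apply hPinj _ (Submodule.sub_mem _ hcC (Submodule.sum_mem _ (fun p _ =>
        Submodule.smul_mem _ _ (b p).2)))
      intro q hq
      have hsum : (∑ p : ↥P, c ↑p • (b p : Fin n → F)) q
          = ∑ p : ↥P, c ↑p * (b p : Fin n → F) q := by
        rw [Finset.sum_apply]; simp
      have : (∑ p : ↥P, c ↑p * (b p : Fin n → F) q) = c q := by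
        rw [Finset.sum_eq_single (⟨q, hq⟩ : ↥P)]
        · rw [hbspec ⟨q, hq⟩ ⟨q, hq⟩]; simp
        · intro p _ hpq
          rw [hbspec p ⟨q, hq⟩, if_neg (fun h => hpq h.symm), mul_zero]
        · simp
      rw [Pi.sub_apply, hsum, this, sub_self]
    have : c i = 0 := by
      have h0 := congrFun hdec i
      have hsum : (∑ p : ↥P, c ↑p • (b p : Fin n → F)) i
          = ∑ p : ↥P, c ↑p * (b p : Fin n → F) i := by
        rw [Finset.sum_apply]; simp
      simp only [Pi.sub_apply, Pi.zero_apply, sub_eq_zero] at h0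
      rw [h0, hsum]
      exact Finset.sum_eq_zero (fun p _ => by rw [hex p, mul_zero])
    exact hci this


theorem star_lower (C D : Submodule F (Fin n → F))
    (hC : ∀ i : Fin n, ∃ c ∈ C, c i ≠ 0)
    (hl : 1 ≤ finrank F D)
    (hz : ∀ d ∈ D, d ≠ 0 → (Finset.univ.filter fun i => d i = 0).card ≤ finrank F D - 1) :
    min n (finrank F C + finrank F D - 1) ≤ finrank F (starProd C D) := by
  set k := finrank F C with hk
  set l := finrank F D with hlrw
  set t := min n (k + l - 1) with ht
  obtain ⟨P, hPcard, hPinj⟩ := exists_infoset C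
  have hkn : k ≤ n := by
    have := Submodule.finrank_le C
    simpa [Module.finrank_fin_fun] using this
  have hkt : k ≤ t := by
    have : k ≤ k + l - 1 := by omega
    omega
  obtain ⟨T, hPT, hTcard⟩ := Finset.exists_superset_card_eq
    (show P.card ≤ t by rw [hPcard]; exact hkt)
    (by simp [ht])
  have key : ∀ i ∈ T, ∃ v ∈ starProd C D, v i ≠ 0 ∧ ∀ j ∈ T, j ≠ i → v j = 0 := by
    intro i hiT
    obtain ⟨p, hpP, c, hcC, hci, hcq⟩ := infoset_pick C hC P hPcard hPinj i
    have hk1 : 1 ≤ k := by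
      rw [hk, ← hPcard]
      exact Finset.card_pos.2 ⟨p, hpP⟩
    set Y := P.erase p with hY
    have hiY : i ∉ Y := by
      intro hiY'
      exact hci (hcq i (Finset.mem_of_mem_erase hiY') (Finset.ne_of_mem_erase hiY'))
    set Z := T \ insert i Y with hZ
    have hiZ : i ∉ Z := by simp [hZ]
    have hsubT : insert i Y ⊆ T := by
      intro j hj
      rcases Finset.mem_insert.1 hj with rfl | hjY
      · exact hiT
      · exact hPT (Finset.mem_of_mem_erase hjY)
    have hcardiY : (insert i Y).card = k := by
      rw [Finset.card_insert_of_notMem hiY, hY, Finset.card_erase_of_mem hpP, hPcard]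
      omega
    have hcardZ : Z.card + 1 ≤ l := by
      rw [hZ, Finset.card_sdiff_of_subset hsubT, hcardiY, hTcard]
      omega
    obtain ⟨d, hdD, hdZ, hdi⟩ := exists_vanishing D hz hl hiZ hcardZ
    refine ⟨fun j => c j * d j, Submodule.subset_span ⟨c, hcC, d, hdD, rfl⟩,
      mul_ne_zero hci hdi, ?_⟩
    intro j hjT hji
    show c j * d j = 0
    by_cases hjZ : j ∈ Z
    · rw [hdZ j hjZ, mul_zero]
    · have hjiY : j ∈ insert i Y := by
        by_contra hcon
        exact hjZ (Finset.mem_sdiff.2 ⟨hjT, hcon⟩)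
      rcases Finset.mem_insert.1 hjiY with rfl | hjY
      · exact absurd rfl hji
      · rw [hcq j (Finset.mem_of_mem_erase hjY) (Finset.ne_of_mem_erase hjY), zero_mul]
  -- the restriction to T is surjective from starProd C D
  set π : ↥(starProd C D) →ₗ[F] (↥T → F) :=
    (restr T).comp (starProd C D).subtype with hπ
  have hsingle : ∀ i₀ : ↥T, (Pi.single i₀ 1 : ↥T → F) ∈ LinearMap.range π := by
    intro i₀
    obtain ⟨v, hv, hvne, hvz⟩ := key ↑i₀ i₀.2
    have : ((v ↑i₀)⁻¹ • π ⟨v, hv⟩) = Pi.single i₀ (1 : F) := by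
      funext j
      rw [Pi.smul_apply, Pi.single_apply]
      have hπj : π ⟨v, hv⟩ j = v ↑j := rfl
      rw [hπj]
      by_cases hji : j = i₀
      · subst hji
        rw [if_pos rfl, smul_eq_mul, inv_mul_cancel₀ hvne]
      · rw [if_neg hji, hvz ↑j j.2 (fun h => hji (Subtype.ext h)), smul_zero]
    rw [← this]
    exact Submodule.smul_mem _ _ (LinearMap.mem_range_self π _)
  have hrange : LinearMap.range π = ⊤ := by
    apply top_unique
    rw [← (Pi.basisFun F ↥T).span_eq]
    apply Submodule.span_le.2
    rintro _ ⟨i₀, rfl⟩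
    rw [Pi.basisFun_apply]
    exact hsingle i₀
  have hfin : t ≤ finrank F (starProd C D) := by
    have h1 := LinearMap.finrank_range_le π
    rw [hrange, finrank_top, Module.finrank_pi, Fintype.card_coe, hTcard] at h1
    exact h1
  exact hfin


end aux

/-- Kernel dimension bound for decoding: if `Dec` is a linear map which is surjective
from `C_A ⋆ C_B` onto `F^{m×n}` and vanishes on `C_A ⋆ C_B^sec`, where `C_A` is
full-support of dimension `mp + X`, `C_B^sec ≤ C_B` is a full-support MDS code of
dimension `X`, and `C_A ⋆ C_B^sec ≠ F^N`, then `dim (C_A ⋆ C_B) ≥ mn + mp + 2X - 1`. -/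
theorem decoder_kernel_dim_bound {F : Type*} [Field F] [Fintype F] [DecidableEq F]
    {N m n p X : ℕ} (CA CB CBsec : Submodule F (Fin N → F))
    (hCAfull : FullSupport CA) (hCAdim : Module.finrank F CA = m * p + X)
    (hBsecfull : FullSupport CBsec) (hBsecMDS : IsMDS CBsec)
    (hBsecdim : Module.finrank F CBsec = X) (hsub : CBsec ≤ CB)
    (hne : starProd CA CBsec ≠ ⊤)
    (Dec : (Fin N → F) →ₗ[F] Matrix (Fin m) (Fin n) F)
    (hker : ∀ v ∈ starProd CA CBsec, Dec v = 0)
    (hsurj : ∀ M : Matrix (Fin m) (Fin n) F, ∃ v ∈ starProd CA CB, Dec v = M) :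
    m * n + m * p + 2 * X - 1 ≤ Module.finrank F (starProd CA CB) := by
  classical
  -- N is positive
  rcases Nat.eq_zero_or_pos N with hN | hN
  · exfalso
    apply hne
    rw [eq_top_iff]
    intro v _
    have hv : v = 0 := by subst hN; funext i; exact i.elim0
    rw [hv]
    exact Submodule.zero_mem _
  have hXle : X ≤ N := by
    have := Submodule.finrank_le CBsec
    rw [hBsecdim, Module.finrank_fin_fun] at this
    exact this
  have hX1 : 1 ≤ X := by
    by_contra hX0
    have hX0' : X = 0 := by omega
    have hbot : CBsec = ⊥ := Submodule.finrank_eq_zero.mp (by rw [hBsecdim, hX0'])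
    obtain ⟨c, hc, hci⟩ := hBsecfull ⟨0, hN⟩
    rw [hbot, Submodule.mem_bot] at hc
    exact hci (by rw [hc]; rfl)
  -- MDS gives the bound on the number of zeros
  have hz : ∀ d ∈ CBsec, d ≠ 0 →
      (Finset.univ.filter fun i => d i = 0).card ≤ finrank F CBsec - 1 := by
    intro d hd hdne
    have hwt := hBsecMDS.2 d hd hdne
    rw [hBsecdim] at hwt ⊢
    have hsplit := Finset.card_filter_add_card_filter_not
      (s := (Finset.univ : Finset (Fin N))) (p := fun i => d i ≠ 0)
    simp only [not_not, Finset.card_univ, Fintype.card_fin] at hsplit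
    unfold wt at hwt
    omega
  have hlow := star_lower CA CBsec hCAfull (by rw [hBsecdim]; exact hX1) hz
  rw [hCAdim, hBsecdim] at hlow
  set W0 := starProd CA CBsec with hW0
  set W := starProd CA CB with hW
  have hW0W : W0 ≤ W := by
    apply Submodule.span_mono
    rintro v ⟨c, hc, d, hd, rfl⟩
    exact ⟨c, hc, d, hsub hd, rfl⟩
  have h₀ : m * p + X + X - 1 ≤ finrank F W0 := by
    rcases min_cases N (m * p + X + X - 1) with ⟨hmin, hcase⟩ | ⟨hmin, hcase⟩
    · exfalso
      apply hne
      apply Submodule.eq_top_of_finrank_eq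
      have hle := Submodule.finrank_le W0
      rw [Module.finrank_fin_fun] at hle ⊢
      rw [hmin] at hlow
      omega
    · rw [hmin] at hlow
      exact hlow
  set f : ↥W →ₗ[F] Matrix (Fin m) (Fin n) F := Dec.comp W.subtype with hf
  have hrange : LinearMap.range f = ⊤ := by
    rw [eq_top_iff]
    intro M _
    obtain ⟨v, hvW, hvd⟩ := hsurj M
    exact ⟨⟨v, hvW⟩, hvd⟩
  have hrank := LinearMap.finrank_range_add_finrank_ker f
  rw [hrange, finrank_top] at hrank
  have hmat : finrank F (Matrix (Fin m) (Fin n) F) = m * n := by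
    rw [Module.finrank_matrix]
    simp
  rw [hmat] at hrank
  have hker0 : finrank F W0 ≤ finrank F (LinearMap.ker f) := by
    have hcomap : Submodule.comap W.subtype W0 ≤ LinearMap.ker f := by
      intro x hx
      simp only [LinearMap.mem_ker]
      exact hker ↑x hx
    have hequiv : finrank F (Submodule.comap W.subtype W0) = finrank F W0 :=
      (Submodule.comapSubtypeEquivOfLe hW0W).finrank_eq
    rw [← hequiv]
    exact Submodule.finrank_mono hcomap
  omega
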